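/- The contraction g is symmetric (i.e. its Hodge dual T squares to a scalar on 1-forms) precisely when β = q⁶α: given nonzero α, β, γ, m ∈ ℂ, there exists c ∈ ℂ with T(T(x)) = c·x for all x ∈ Λ¹ if and only if β = q⁶ α. -/

import Mathlib

open TensorProduct

noncomputable section

/-- The 3-dimensional complex vector space with basis `ω 0 = ω₋`, `ω 1 = ω₊`, `ω 2 = ω_z`. -/
abbrev V : Type := Fin 3 → ℂ

/-- The distinguished basis `(ω₋, ω₊, ω_z)` of `V`. -/
def ω : Fin 3 → V := fun i => Pi.basisFun ℂ (Fin 3) i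

/-- The degree-2 relations of the exterior algebra of the 3d calculus: each generator is
set equal to `0`.  `RingQuot` of this relation is the quotient of the tensor algebra by the
two-sided ideal generated by the six elements. -/
inductive rel (q : ℝ) : TensorAlgebra ℂ V → TensorAlgebra ℂ V → Prop
  | mm : rel q (TensorAlgebra.ι ℂ (ω 0) * TensorAlgebra.ι ℂ (ω 0)) 0
  | pp : rel q (TensorAlgebra.ι ℂ (ω 1) * TensorAlgebra.ι ℂ (ω 1)) 0
  | zz : rel q (TensorAlgebra.ι ℂ (ω 2) * TensorAlgebra.ι ℂ (ω 2)) 0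
  | mp : rel q (TensorAlgebra.ι ℂ (ω 0) * TensorAlgebra.ι ℂ (ω 1) +
      ((q : ℂ) ^ 2)⁻¹ • (TensorAlgebra.ι ℂ (ω 1) * TensorAlgebra.ι ℂ (ω 0))) 0
  | zm : rel q (TensorAlgebra.ι ℂ (ω 2) * TensorAlgebra.ι ℂ (ω 0) +
      (q : ℂ) ^ 4 • (TensorAlgebra.ι ℂ (ω 0) * TensorAlgebra.ι ℂ (ω 2))) 0
  | zp : rel q (TensorAlgebra.ι ℂ (ω 2) * TensorAlgebra.ι ℂ (ω 1) +
      ((q : ℂ) ^ 4)⁻¹ • (TensorAlgebra.ι ℂ (ω 1) * TensorAlgebra.ι ℂ (ω 2))) 0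

/-- The exterior algebra `Λ` of the 3d calculus. -/
abbrev Lam (q : ℝ) : Type := RingQuot (rel q)

/-- The quotient map `T(V) → Λ`. -/
def mkL (q : ℝ) : TensorAlgebra ℂ V →ₐ[ℂ] Lam q := RingQuot.mkAlgHom ℂ (rel q)

/-- The degree-`k` component `Λᵏ` of `Λ`: the image of the `k`-th power of the degree-1
part of the tensor algebra (the grading induced from the tensor algebra). -/
def gradeL (q : ℝ) (k : ℕ) : Submodule ℂ (Lam q) :=
  Submodule.map (mkL q).toLinearMap
    ((LinearMap.range (TensorAlgebra.ι ℂ : V →ₗ[ℂ] TensorAlgebra ℂ V)) ^ k)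

/-- The images `ω₋, ω₊, ω_z` of the basis 1-forms in `Λ¹`. -/
def ωL (q : ℝ) (a : Fin 3) : Lam q := mkL q (TensorAlgebra.ι ℂ (ω a))

/-- `f₋ = ω₋∧ω_z ∈ Λ²`. -/
def fm (q : ℝ) : Lam q := mkL q (TensorAlgebra.ι ℂ (ω 0) * TensorAlgebra.ι ℂ (ω 2))

/-- `f₊ = ω₊∧ω_z ∈ Λ²`. -/
def fp (q : ℝ) : Lam q := mkL q (TensorAlgebra.ι ℂ (ω 1) * TensorAlgebra.ι ℂ (ω 2))

/-- `f_z = ω₋∧ω₊ ∈ Λ²`. -/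
def fz (q : ℝ) : Lam q := mkL q (TensorAlgebra.ι ℂ (ω 0) * TensorAlgebra.ι ℂ (ω 1))

/-- The top form `θ = ω₋∧ω₊∧ω_z ∈ Λ³`. -/
def θL (q : ℝ) : Lam q :=
  mkL q (TensorAlgebra.ι ℂ (ω 0) * TensorAlgebra.ι ℂ (ω 1) * TensorAlgebra.ι ℂ (ω 2))

/-- `λ₂ = 1 + q²`. -/
def lam2 (q : ℝ) : ℂ := 1 + (q : ℂ) ^ 2

/-- `λ₃ = 1 + 2q² + 2q⁴ + q⁶`. -/
def lam3 (q : ℝ) : ℂ := 1 + 2 * (q : ℂ) ^ 2 + 2 * (q : ℂ) ^ 4 + (q : ℂ) ^ 6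

/-- `T : Λ → Λ` is the Hodge operator of the left-invariant contraction
`g(ω₋,ω₊) = α`, `g(ω₊,ω₋) = β`, `g(ω_z,ω_z) = γ` with volume form `μ = mθ`: these
equations pin down `T` on the basis `1, ω₋, ω₊, ω_z, f₋, f₊, f_z, θ` of `Λ`. -/
def IsHodge (q : ℝ) (α β γ m : ℂ) (T : Lam q →ₗ[ℂ] Lam q) : Prop :=
  T 1 = m • θL q ∧
  T (ωL q 0) = (-(((q : ℂ) ^ 2)⁻¹ * m * β)) • fm q ∧
  T (ωL q 1) = (m * α) • fp q ∧
  T (ωL q 2) = (m * γ) • fz q ∧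
  T (fm q) = (2 * ((q : ℂ) ^ 4)⁻¹ * (lam2 q)⁻¹ * m * β * γ) • ωL q 0 ∧
  T (fp q) = (-(2 * (q : ℂ) ^ 6 * (lam2 q)⁻¹ * m * α * γ)) • ωL q 1 ∧
  T (fz q) = (-(2 * (lam2 q)⁻¹ * m * α * β)) • ωL q 2 ∧
  T (θL q) = (-(6 * (q : ℂ) ^ 4 * (lam3 q)⁻¹ * m * α * β * γ)) • (1 : Lam q)

/-- Auxiliary: evaluation algebra hom to the trivial square-zero extension. -/
def evalPhi (q : ℝ) : Lam q →ₐ[ℂ] TrivSqZeroExt ℂ V :=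
  RingQuot.liftAlgHom ℂ ⟨TensorAlgebra.lift ℂ (TrivSqZeroExt.inrHom ℂ V), by
    rintro x y h
    induction h <;>
      simp [TensorAlgebra.lift_ι_apply, TrivSqZeroExt.inrHom_apply,
        TrivSqZeroExt.inr_mul_inr]⟩

lemma evalPhi_ωL (q : ℝ) (a : Fin 3) :
    evalPhi q (ωL q a) = TrivSqZeroExt.inr (ω a) := by
  rw [ωL, _root_.mkL, evalPhi, RingQuot.liftAlgHom_mkAlgHom_apply]
  simp [TensorAlgebra.lift_ι_apply]

lemma ω_ne_zero (a : Fin 3) : ω a ≠ 0 := by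
  intro h
  have := congrFun h a
  simp [ω, Pi.basisFun_apply] at this

lemma ωL_ne_zero (q : ℝ) (a : Fin 3) : ωL q a ≠ 0 := by
  intro h
  have := congrArg (evalPhi q) h
  rw [evalPhi_ωL, map_zero] at this
  exact ω_ne_zero a (by simpa using congrArg TrivSqZeroExt.snd this)

lemma mkL_ι (q : ℝ) (v : V) :
    mkL q (TensorAlgebra.ι ℂ v) = ∑ a, v a • ωL q a := by
  have hv : v = ∑ a, v a • ω a := by
    funext j
    simp [ω, Pi.basisFun_apply, Finset.sum_apply, Pi.single_apply]
  conv_lhs => rw [hv]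
  simp [ωL, map_sum, map_smul]

lemma scalar_eq {R A : Type} [Field R] [AddCommGroup A] [Module R A]
    {s c : R} {x : A} (hx : x ≠ 0) (h : s • x = c • x) : s = c := by
  have h0 : (s - c) • x = 0 := by rw [sub_smul, h, sub_self]
  rcases smul_eq_zero.mp h0 with h' | h'
  · exact sub_eq_zero.mp h'
  · exact absurd h' hx

/-- `T² ` is a scalar on `Λ¹` (the contraction is *symmetric*)
if and only if `β = q⁶ α`. -/
theorem hodge_symmetric_iff (q : ℝ) (hq0 : 0 < q) (hq1 : q < 1)
    (α β γ m : ℂ) (hα : α ≠ 0) (hβ : β ≠ 0) (hγ : γ ≠ 0) (hm : m ≠ 0)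
    (T : Lam q →ₗ[ℂ] Lam q) (hT : IsHodge q α β γ m T) :
    (∃ c : ℂ, ∀ x ∈ gradeL q 1, T (T x) = c • x) ↔ β = (q : ℂ) ^ 6 * α := by
  obtain ⟨h1, h2, h3, h4, h5, h6, h7, h8⟩ := hT
  have hqC : (q : ℂ) ≠ 0 := by exact_mod_cast hq0.ne'
  have hlam2 : lam2 q ≠ 0 := by
    have : lam2 q = ((1 + q ^ 2 : ℝ) : ℂ) := by simp [lam2]
    rw [this]
    exact_mod_cast (by positivity : (1 + q ^ 2 : ℝ) ≠ 0)
  -- T² on the basis 1-forms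
  have hTT0 : T (T (ωL q 0)) =
      ((-(((q : ℂ) ^ 2)⁻¹ * m * β)) * (2 * ((q : ℂ) ^ 4)⁻¹ * (lam2 q)⁻¹ * m * β * γ)) • ωL q 0 := by
    rw [h2, map_smul, h5, smul_smul]
  have hTT1 : T (T (ωL q 1)) =
      ((m * α) * (-(2 * (q : ℂ) ^ 6 * (lam2 q)⁻¹ * m * α * γ))) • ωL q 1 := by
    rw [h3, map_smul, h6, smul_smul]
  have hTT2 : T (T (ωL q 2)) =
      ((m * γ) * (-(2 * (lam2 q)⁻¹ * m * α * β))) • ωL q 2 := by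
    rw [h4, map_smul, h7, smul_smul]
  have hmem : ∀ a : Fin 3, ωL q a ∈ gradeL q 1 := by
    intro a
    refine ⟨TensorAlgebra.ι ℂ (ω a), ?_, rfl⟩
    rw [pow_one]
    exact ⟨ω a, rfl⟩
  constructor
  · rintro ⟨c, hc⟩
    have e1 : ((m * α) * (-(2 * (q : ℂ) ^ 6 * (lam2 q)⁻¹ * m * α * γ))) = c :=
      scalar_eq (ωL_ne_zero q 1) (hTT1.symm.trans (hc _ (hmem 1)))
    have e2 : ((m * γ) * (-(2 * (lam2 q)⁻¹ * m * α * β))) = c :=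
      scalar_eq (ωL_ne_zero q 2) (hTT2.symm.trans (hc _ (hmem 2)))
    have key : ((m * α) * (-(2 * (q : ℂ) ^ 6 * (lam2 q)⁻¹ * m * α * γ))) =
        ((m * γ) * (-(2 * (lam2 q)⁻¹ * m * α * β))) := e1.trans e2.symm
    field_simp [hlam2] at key
    have hne : (2 * m ^ 2 * α * γ : ℂ) ≠ 0 :=
      mul_ne_zero (mul_ne_zero (mul_ne_zero two_ne_zero (pow_ne_zero 2 hm)) hα) hγ
    apply mul_left_cancel₀ hne
    linear_combination (2 * m ^ 2 * α * γ) * key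
  · intro hβα
    set c : ℂ := (m * γ) * (-(2 * (lam2 q)⁻¹ * m * α * β)) with hcdef
    have s0 : (-(((q : ℂ) ^ 2)⁻¹ * m * β) * (2 * ((q : ℂ) ^ 4)⁻¹ * (lam2 q)⁻¹ * m * β * γ)) = c := by
      rw [hcdef]; subst hβα; field_simp; try ring
      try tauto
    have s1 : ((m * α) * (-(2 * (q : ℂ) ^ 6 * (lam2 q)⁻¹ * m * α * γ))) = c := by
      rw [hcdef]; subst hβα; field_simp; try ring
      try tauto
    have hall : ∀ a : Fin 3, T (T (ωL q a)) = c • ωL q a := by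
      intro a
      fin_cases a
      · exact hTT0.trans (by rw [s0]; rfl)
      · exact hTT1.trans (by rw [s1]; rfl)
      · exact hTT2.trans (by rfl)
    refine ⟨c, ?_⟩
    rintro x ⟨y, hy, rfl⟩
    rw [pow_one] at hy
    obtain ⟨v, rfl⟩ := hy
    have hx : (mkL q).toLinearMap (TensorAlgebra.ι ℂ v) = ∑ a, v a • ωL q a := mkL_ι q v
    rw [hx, map_sum, map_sum, Finset.smul_sum]
    exact Finset.sum_congr rfl fun a _ => by rw [map_smul, map_smul, hall a, smul_comm]

end
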